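/- Let H and M be 2N×2N complex matrices with H Hermitian and antisymmetric (Hᵀ = −H) and M Hermitian. Set Q := −2i•H + M + Mᵀ and L_BdG := fromBlocks(−2i•H − M − Mᵀ, 2•(M − Mᵀ), 0, −2i•H + M + Mᵀ), and suppose Y is a 2N×2N complex matrix satisfying Qᴴ⬝Y + Y⬝Q + 2•(M − Mᵀ) = 0. Define T := fromBlocks(1, Y, 0, 1) and Tinv := fromBlocks(1, −Y, 0, 1). Then T⬝Tinv = 1, Tinv⬝T = 1, and T ⬝ L_BdG ⬝ Tinv = fromBlocks(−Qᴴ, 0, 0, Q). -/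
import Mathlib


open Matrix

theorem stmt_19 {N : ℕ} (H M Y : Matrix (Fin (2 * N)) (Fin (2 * N)) ℂ)
    (hH : H.IsHermitian) (hHanti : Hᵀ = -H) (hM : M.IsHermitian)
    (Q : Matrix (Fin (2 * N)) (Fin (2 * N)) ℂ)
    (hQ : Q = (-(2 * Complex.I)) • H + M + Mᵀ)
    (LBdG : Matrix (Fin (2 * N) ⊕ Fin (2 * N)) (Fin (2 * N) ⊕ Fin (2 * N)) ℂ)
    (hLBdG : LBdG = fromBlocks ((-(2 * Complex.I)) • H - M - Mᵀ) ((2 : ℂ) • (M - Mᵀ))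
      0 ((-(2 * Complex.I)) • H + M + Mᵀ))
    (hY : Qᴴ * Y + Y * Q + (2 : ℂ) • (M - Mᵀ) = 0)
    (T Tinv : Matrix (Fin (2 * N) ⊕ Fin (2 * N)) (Fin (2 * N) ⊕ Fin (2 * N)) ℂ)
    (hT : T = fromBlocks 1 Y 0 1) (hTinv : Tinv = fromBlocks 1 (-Y) 0 1) :
    T * Tinv = 1 ∧ Tinv * T = 1 ∧ T * LBdG * Tinv = fromBlocks (-Qᴴ) 0 0 Q := by
  have hQH : Qᴴ = (2 * Complex.I) • H + M + Mᵀ := by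
    rw [hQ, conjTranspose_add, conjTranspose_add, conjTranspose_smul, hH.eq, hM.eq,
      hM.transpose.eq]
    congr 2
    simp [Complex.ext_iff]
  have hA : (-(2 * Complex.I)) • H - M - Mᵀ = -Qᴴ := by
    rw [hQH]
    module
  constructor
  · subst hT hTinv
    rw [fromBlocks_multiply]
    simp [fromBlocks_one]
  constructor
  · subst hT hTinv
    rw [fromBlocks_multiply]
    simp [fromBlocks_one]
  · subst hT hTinv hLBdG
    rw [fromBlocks_multiply, fromBlocks_multiply, hA, ← hQ, fromBlocks_inj]
    refine ⟨by simp, ?_, by simp, by simp⟩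
    simp only [Matrix.one_mul, Matrix.mul_one, Matrix.zero_mul, Matrix.mul_zero,
      add_zero, zero_add, Matrix.mul_neg, Matrix.neg_mul, neg_neg]
    linear_combination (norm := module) hY
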